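/- Let m ≥ 1 and n ≥ 2 be integers, and let U₁, …, Uₙ be independent identically distributed random variables taking values in the finite alphabet {1, …, m}, with distribution p_i = Pr[U₁ = i] and Shannon entropy H(p) = −Σ_{i=1}^m p_i·log₂ p_i. Let p̂_i = (1/n)·#{k : U_k = i} be the empirical frequencies and Ĥ_MLE = −Σ_{i=1}^m p̂_i·log₂ p̂_i the empirical (maximum-likelihood) entropy. Let A be any event (measurable with respect to the σ-algebra generated by U₁, …, Uₙ) with p_A := Pr[A] > 0. Then for every real ε with 0 < ε ≤ 1, the probability, under the law of (U₁, …, Uₙ) conditioned on A, that H(p) ≤ Ĥ_MLE − √(2·(log₂ n)²·ln(2/ε)/n), is at most ε/p_A. -/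

import Mathlib

open Real Finset MeasureTheory ProbabilityTheory


/-- The core analytic inequality behind Hoeffding's lemma. -/
theorem hoeffding_core {p : ℝ} (hp0 : 0 ≤ p) (hp1 : p ≤ 1) (h : ℝ) :
    (1 - p) * Real.exp (-p * h) + p * Real.exp ((1 - p) * h) ≤ Real.exp (h ^ 2 / 8) := by
  -- D t = 1 - p + p * exp t > 0
  have hD : ∀ t : ℝ, 0 < 1 - p + p * Real.exp t := by
    intro t
    rcases eq_or_lt_of_le hp0 with h0 | h0
    · simp [← h0]
    · have := Real.exp_pos t
      nlinarith
  set g : ℝ → ℝ := fun t => t ^ 2 / 8 + p * t - Real.log (1 - p + p * Real.exp t) with hg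
  set g' : ℝ → ℝ := fun t => t / 4 + p - p * Real.exp t / (1 - p + p * Real.exp t) with hg'
  have hgderiv : ∀ t, HasDerivAt g (g' t) t := by
    intro t
    have h1 : HasDerivAt (fun t : ℝ => 1 - p + p * Real.exp t) (p * Real.exp t) t := by
      simpa using ((Real.hasDerivAt_exp t).const_mul p).const_add (1 - p)
    have h2 : HasDerivAt (fun t : ℝ => Real.log (1 - p + p * Real.exp t))
        (p * Real.exp t / (1 - p + p * Real.exp t)) t := h1.log (hD t).ne'
    have h3 : HasDerivAt (fun t : ℝ => t ^ 2 / 8 + p * t) (t / 4 + p) t := by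
      have : HasDerivAt (fun t : ℝ => t ^ 2 / 8) (t / 4) t := by
        have := (hasDerivAt_pow 2 t).div_const 8
        refine this.congr_deriv ?_; ring
      simpa using this.fun_add ((hasDerivAt_id t).const_mul p)
    simpa [hg, hg'] using h3.fun_sub h2
  have hg'deriv : ∀ t, HasDerivAt g'
      (1 / 4 - p * Real.exp t * (1 - p) / (1 - p + p * Real.exp t) ^ 2) t := by
    intro t
    have h1 : HasDerivAt (fun t : ℝ => 1 - p + p * Real.exp t) (p * Real.exp t) t := by
      simpa using ((Real.hasDerivAt_exp t).const_mul p).const_add (1 - p)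
    have h0 : HasDerivAt (fun t : ℝ => p * Real.exp t) (p * Real.exp t) t :=
      (Real.hasDerivAt_exp t).const_mul p
    have h2 : HasDerivAt (fun t : ℝ => p * Real.exp t / (1 - p + p * Real.exp t))
        ((p * Real.exp t * (1 - p + p * Real.exp t) - p * Real.exp t * (p * Real.exp t)) /
          (1 - p + p * Real.exp t) ^ 2) t := h0.div h1 (hD t).ne'
    have h3 : HasDerivAt (fun t : ℝ => t / 4 + p) (1 / 4) t := by
      simpa using (hasDerivAt_id t).div_const 4 |>.add_const p
    have := h3.fun_sub h2
    refine this.congr_deriv ?_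
    field_simp
    ring
  have hg''nonneg : ∀ t, 0 ≤ 1 / 4 - p * Real.exp t * (1 - p) / (1 - p + p * Real.exp t) ^ 2 := by
    intro t
    rw [sub_nonneg, div_le_iff₀ (pow_pos (hD t) 2)]
    nlinarith [Real.exp_pos t, sq_nonneg (1 - p - p * Real.exp t)]
  -- g' is monotone
  have hg'mono : Monotone g' := by
    apply monotone_of_deriv_nonneg
    · exact fun t => (hg'deriv t).differentiableAt
    · intro t
      rw [(hg'deriv t).deriv]
      exact hg''nonneg t
  have hg'0 : g' 0 = 0 := by simp [hg']
  have hgmin : ∀ t, 0 ≤ g t := by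
    have hgc : Continuous g := by
      have : Differentiable ℝ g := fun t => (hgderiv t).differentiableAt
      exact this.continuous
    intro t
    have hg0 : g 0 = 0 := by simp [hg]
    rcases le_total 0 t with ht | ht
    · have : MonotoneOn g (Set.Ici 0) := by
        apply monotoneOn_of_deriv_nonneg (convex_Ici 0) hgc.continuousOn
        · intro x _
          exact (hgderiv x).differentiableAt.differentiableWithinAt
        · intro x hx
          rw [(hgderiv x).deriv]
          rw [interior_Ici] at hx
          have hx0 : (0:ℝ) < x := hx
          rw [← hg'0]
          exact hg'mono hx0.le
      have := this (Set.mem_Ici.2 le_rfl) (Set.mem_Ici.2 ht) ht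
      rwa [hg0] at this
    · have : AntitoneOn g (Set.Iic 0) := by
        apply antitoneOn_of_deriv_nonpos (convex_Iic 0) hgc.continuousOn
        · intro x _
          exact (hgderiv x).differentiableAt.differentiableWithinAt
        · intro x hx
          rw [(hgderiv x).deriv]
          rw [interior_Iic] at hx
          have hx0 : x < 0 := hx
          rw [← hg'0]
          exact hg'mono hx0.le
      have := this (Set.mem_Iic.2 ht) (Set.mem_Iic.2 le_rfl) ht
      rwa [hg0] at this
  -- conclude
  have hgt := hgmin h
  have hlog : Real.log (1 - p + p * Real.exp h) ≤ h ^ 2 / 8 + p * h := by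
    simp only [hg] at hgt; linarith
  have hD' := hD h
  have := (Real.log_le_iff_le_exp hD').1 hlog
  calc (1 - p) * Real.exp (-p * h) + p * Real.exp ((1 - p) * h)
      = Real.exp (-p * h) * (1 - p + p * Real.exp h) := by
        have e1 : Real.exp ((1 - p) * h) = Real.exp (-p * h) * Real.exp h := by
          rw [← Real.exp_add]; ring_nf
        rw [e1]; ring
    _ ≤ Real.exp (-p * h) * Real.exp (h ^ 2 / 8 + p * h) := by
        apply mul_le_mul_of_nonneg_left this (Real.exp_pos _).le
    _ = Real.exp (h ^ 2 / 8) := by rw [← Real.exp_add]; ring_nf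


theorem hoeffding_avg {m : ℕ} [NeZero m] (u v : Fin m → ℝ) (hu0 : ∀ j, 0 ≤ u j)
    (hu1 : ∑ j, u j = 1) {c lam : ℝ} (hc : 0 ≤ c)
    (hosc : ∀ j j', v j - v j' ≤ c) :
    ∑ j, u j * Real.exp (lam * v j)
      ≤ Real.exp (lam ^ 2 * c ^ 2 / 8) * Real.exp (lam * ∑ j, u j * v j) := by
  have hne : (Finset.univ : Finset (Fin m)).Nonempty := Finset.univ_nonempty
  set a := Finset.univ.inf' hne v with ha
  set b := Finset.univ.sup' hne v with hb
  have hav : ∀ j, a ≤ v j := fun j => Finset.inf'_le v (Finset.mem_univ j)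
  have hvb : ∀ j, v j ≤ b := fun j => Finset.le_sup' v (Finset.mem_univ j)
  have hba : b - a ≤ c := by
    obtain ⟨j0, -, hj0⟩ := Finset.exists_mem_eq_sup' hne v
    obtain ⟨j1, -, hj1⟩ := Finset.exists_mem_eq_inf' hne v
    rw [hb, ha, hj0, hj1]; exact hosc j0 j1
  set μ := ∑ j, u j * v j with hμ
  have hμa : a ≤ μ := by
    have h1 : ∑ j, u j * (v j - a) = μ - (∑ j, u j) * a := by
      rw [hμ, Finset.sum_mul, ← Finset.sum_sub_distrib]
      exact Finset.sum_congr rfl fun j _ => by ring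
    have h2 := Finset.sum_nonneg fun j (_ : j ∈ Finset.univ) =>
      mul_nonneg (hu0 j) (sub_nonneg.2 (hav j))
    rw [h1, hu1] at h2
    linarith
  have hμb : μ ≤ b := by
    have h1 : ∑ j, u j * (b - v j) = (∑ j, u j) * b - μ := by
      rw [hμ, Finset.sum_mul, ← Finset.sum_sub_distrib]
      exact Finset.sum_congr rfl fun j _ => by ring
    have h2 := Finset.sum_nonneg fun j (_ : j ∈ Finset.univ) =>
      mul_nonneg (hu0 j) (sub_nonneg.2 (hvb j))
    rw [h1, hu1] at h2
    linarith
  rcases eq_or_lt_of_le (by linarith [hba] : a ≤ b) with hab | hab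
  · -- degenerate: all values equal
    have hva : ∀ j, v j = a := fun j => le_antisymm (hab ▸ hvb j) (hav j)
    have h1 : ∑ j, u j * Real.exp (lam * v j) = Real.exp (lam * a) := by
      simp only [hva]
      rw [← Finset.sum_mul, hu1, one_mul]
    have h2 : μ = a := by
      rw [hμ]
      simp only [hva]
      rw [← Finset.sum_mul, hu1, one_mul]
    rw [h1, h2]
    nlinarith [Real.exp_pos (lam * a), Real.one_le_exp (by positivity : (0:ℝ) ≤ lam ^ 2 * c ^ 2 / 8)]
  · have hba' : 0 < b - a := sub_pos.2 hab
    -- pointwise convexity bound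
    have hpt : ∀ j, Real.exp (lam * v j)
        ≤ ((b - v j) * Real.exp (lam * a) + (v j - a) * Real.exp (lam * b)) / (b - a) := by
      intro j
      have w1 : (0:ℝ) ≤ (b - v j) / (b - a) :=
        div_nonneg (sub_nonneg.2 (hvb j)) hba'.le
      have w2 : (0:ℝ) ≤ (v j - a) / (b - a) :=
        div_nonneg (sub_nonneg.2 (hav j)) hba'.le
      have wsum : (b - v j) / (b - a) + (v j - a) / (b - a) = 1 := by
        field_simp
        ring
      have := convexOn_exp.2 (Set.mem_univ (lam * a)) (Set.mem_univ (lam * b)) w1 w2 wsum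
      simp only [smul_eq_mul] at this
      have harg : (b - v j) / (b - a) * (lam * a) + (v j - a) / (b - a) * (lam * b)
          = lam * v j := by
        field_simp
        ring
      rw [harg] at this
      calc Real.exp (lam * v j)
          ≤ (b - v j) / (b - a) * Real.exp (lam * a) + (v j - a) / (b - a) * Real.exp (lam * b) :=
            this
        _ = ((b - v j) * Real.exp (lam * a) + (v j - a) * Real.exp (lam * b)) / (b - a) := by
            ring
    have hsum : ∑ j, u j * Real.exp (lam * v j)
        ≤ ((b - μ) * Real.exp (lam * a) + (μ - a) * Real.exp (lam * b)) / (b - a) := by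
      calc ∑ j, u j * Real.exp (lam * v j)
          ≤ ∑ j, u j * (((b - v j) * Real.exp (lam * a) + (v j - a) * Real.exp (lam * b)) / (b - a)) :=
            Finset.sum_le_sum fun j _ => mul_le_mul_of_nonneg_left (hpt j) (hu0 j)
        _ = ((b - μ) * Real.exp (lam * a) + (μ - a) * Real.exp (lam * b)) / (b - a) := by
            simp only [← mul_div_assoc]
            rw [← Finset.sum_div]
            congr 1
            have h1 : ∑ j, u j * ((b - v j) * Real.exp (lam * a) + (v j - a) * Real.exp (lam * b))
                = (∑ j, u j) * (b * Real.exp (lam * a) - a * Real.exp (lam * b))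
                  + (∑ j, u j * v j) * (Real.exp (lam * b) - Real.exp (lam * a)) := by
              rw [Finset.sum_mul, Finset.sum_mul, ← Finset.sum_add_distrib]
              exact Finset.sum_congr rfl fun j _ => by ring
            rw [h1, hu1, ← hμ]
            ring
    set p := (μ - a) / (b - a) with hp
    have hp0 : 0 ≤ p := div_nonneg (sub_nonneg.2 hμa) hba'.le
    have hp1 : p ≤ 1 := by
      rw [hp, div_le_one hba']; linarith
    have key := hoeffding_core hp0 hp1 (lam * (b - a))
    have e1 : Real.exp (lam * a) = Real.exp (lam * μ) * Real.exp (-p * (lam * (b - a))) := by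
      rw [← Real.exp_add]
      congr 1
      have : p * (b - a) = μ - a := by rw [hp]; field_simp
      linear_combination lam * this
    have e2 : Real.exp (lam * b) = Real.exp (lam * μ) * Real.exp ((1 - p) * (lam * (b - a))) := by
      rw [← Real.exp_add]
      congr 1
      have : p * (b - a) = μ - a := by rw [hp]; field_simp
      linear_combination lam * this
    have e3 : ((b - μ) * Real.exp (lam * a) + (μ - a) * Real.exp (lam * b)) / (b - a)
        = Real.exp (lam * μ) *
          ((1 - p) * Real.exp (-p * (lam * (b - a))) + p * Real.exp ((1 - p) * (lam * (b - a)))) := by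
      rw [e1, e2]
      have hb1 : b - μ = (1 - p) * (b - a) := by rw [hp]; field_simp; ring
      have hb2 : μ - a = p * (b - a) := by rw [hp]; field_simp
      rw [hb1, hb2]
      field_simp
    have e4 : (lam * (b - a)) ^ 2 / 8 ≤ lam ^ 2 * c ^ 2 / 8 := by
      have h1 : (b - a) ^ 2 ≤ c ^ 2 := by nlinarith
      nlinarith [sq_nonneg lam]
    calc ∑ j, u j * Real.exp (lam * v j)
        ≤ ((b - μ) * Real.exp (lam * a) + (μ - a) * Real.exp (lam * b)) / (b - a) := hsum
      _ = Real.exp (lam * μ) *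
          ((1 - p) * Real.exp (-p * (lam * (b - a))) + p * Real.exp ((1 - p) * (lam * (b - a)))) := e3
      _ ≤ Real.exp (lam * μ) * Real.exp ((lam * (b - a)) ^ 2 / 8) :=
          mul_le_mul_of_nonneg_left key (Real.exp_pos _).le
      _ ≤ Real.exp (lam * μ) * Real.exp (lam ^ 2 * c ^ 2 / 8) :=
          mul_le_mul_of_nonneg_left (Real.exp_le_exp.2 e4) (Real.exp_pos _).le
      _ = Real.exp (lam ^ 2 * c ^ 2 / 8) * Real.exp (lam * μ) := mul_comm _ _


lemma grid_negMulLog {n : ℕ} (hn : 2 ≤ n) (a : ℕ) (ha : a + 1 ≤ n) :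
    |Real.negMulLog (((a:ℝ) + 1) / n) - Real.negMulLog ((a:ℝ) / n)|
      ≤ Real.log n / n := by
  have hN0 : (0:ℝ) < n := by positivity
  have hN2 : (2:ℝ) ≤ n := by exact_mod_cast hn
  have hlogN : 0 ≤ Real.log n := Real.log_nonneg (by linarith)
  rcases Nat.eq_zero_or_pos a with rfl | hapos
  · simp only [Nat.cast_zero, zero_add, zero_div, Real.negMulLog_zero, sub_zero]
    have h1 : Real.negMulLog (1 / n) = Real.log n / n := by
      rw [Real.negMulLog, Real.log_div one_ne_zero hN0.ne', Real.log_one]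
      field_simp
      ring
    rw [h1, abs_of_nonneg (by positivity)]
  · have ha1 : (1:ℝ) ≤ (a:ℝ) := by exact_mod_cast hapos
    have han : (a:ℝ) + 1 ≤ n := by exact_mod_cast ha
    set u : ℝ := (a:ℝ) / n with hu
    set v : ℝ := ((a:ℝ) + 1) / n with hv
    have hu0 : 0 < u := by positivity
    have hv0 : 0 < v := by positivity
    have huv : u < v := by
      rw [hu, hv]; exact (div_lt_div_iff_of_pos_right hN0).2 (by linarith)
    have hv1 : v ≤ 1 := by
      rw [hv, div_le_one hN0]; linarith
    have h1n : 1 / (n:ℝ) ≤ u := by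
      rw [hu]; exact (div_le_div_iff_of_pos_right hN0).2 ha1
    have hvu : v - u = 1 / n := by
      rw [hu, hv]; field_simp; ring
    have hveq : v = u + 1 / n := by linarith
    have hloguv : Real.log u ≤ Real.log v := Real.log_le_log hu0 huv.le
    have hupper : Real.negMulLog v - Real.negMulLog u ≤ Real.log n / n := by
      have expand : Real.negMulLog v - Real.negMulLog u
          = -(1/(n:ℝ)) * Real.log v - u * (Real.log v - Real.log u) := by
        rw [Real.negMulLog, Real.negMulLog, hveq]; ring
      have hlv : -Real.log n ≤ Real.log v := by
        have := Real.log_le_log (by positivity : (0:ℝ) < 1/n) (by linarith : 1/(n:ℝ) ≤ v)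
        rwa [Real.log_div one_ne_zero hN0.ne', Real.log_one, zero_sub] at this
      have b1 : -(1/(n:ℝ)) * Real.log v ≤ Real.log n / n := by
        have h2 : -Real.log v ≤ Real.log n := by linarith
        calc -(1/(n:ℝ)) * Real.log v = (-Real.log v) / n := by ring
          _ ≤ Real.log n / n := (div_le_div_iff_of_pos_right hN0).2 h2
      have b2 : -u * (Real.log v - Real.log u) ≤ 0 := by nlinarith
      linarith
    have hlower : Real.negMulLog u - Real.negMulLog v ≤ Real.log n / n := by
      have expand : Real.negMulLog u - Real.negMulLog v
          = (1/(n:ℝ)) * Real.log v + u * (Real.log v - Real.log u) := by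
        rw [Real.negMulLog, Real.negMulLog, hveq]; ring
      have b3 : (1/(n:ℝ)) * Real.log v ≤ 0 := by
        have := Real.log_nonpos hv0.le hv1
        nlinarith
      have b4 : u * (Real.log v - Real.log u) ≤ 1 / n := by
        have hldiv : Real.log v - Real.log u = Real.log (v / u) :=
          (Real.log_div hv0.ne' hu0.ne').symm
        have h5 : Real.log (v / u) ≤ v / u - 1 :=
          Real.log_le_sub_one_of_pos (by positivity)
        have h6 : u * (v / u - 1) = v - u := by field_simp
        rw [hldiv]
        nlinarith
      rcases lt_or_eq_of_le hn with h3 | h2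
      · have h3' : (3:ℝ) ≤ n := by exact_mod_cast h3
        have hlog1 : 1 ≤ Real.log n := by
          rw [Real.le_log_iff_exp_le hN0]
          have := Real.exp_one_lt_d9
          linarith
        have : 1/(n:ℝ) ≤ Real.log n / n := (div_le_div_iff_of_pos_right hN0).2 hlog1
        linarith
      · -- n = 2, hence a = 1
        have ha2 : a = 1 := by omega
        subst ha2
        have hn2 : (n:ℝ) = 2 := by exact_mod_cast h2.symm
        have hu2 : u = 1/2 := by rw [hu, hn2]; norm_num
        have hv2 : v = 1 := by rw [hv, hn2]; norm_num
        rw [hu2, hv2, Real.negMulLog_one, hn2]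
        have : Real.negMulLog (1/2) = Real.log 2 / 2 := by
          rw [Real.negMulLog, Real.log_div one_ne_zero two_ne_zero, Real.log_one]
          ring
        rw [this]
        linarith
    rw [abs_sub_le_iff]
    exact ⟨hupper, hlower⟩



namespace EMcD


variable {n m : ℕ}

noncomputable def wgt (q : Fin m → ℝ) (x : Fin n → Fin m) : ℝ := ∏ k, q (x k)

noncomputable def EE (q : Fin m → ℝ) (f : (Fin n → Fin m) → ℝ) : ℝ :=
  ∑ x : Fin n → Fin m, wgt q x * f x

noncomputable def Texp (q : Fin m → ℝ) (k : Fin n) (f : (Fin n → Fin m) → ℝ)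
    (x : Fin n → Fin m) : ℝ := ∑ j, q j * f (Function.update x k j)

noncomputable def CE (q : Fin m → ℝ) (s : Finset (Fin n)) (f : (Fin n → Fin m) → ℝ)
    (x : Fin n → Fin m) : ℝ :=
  ∑ y : Fin n → Fin m, (∏ k ∈ s, q (y k)) * ((m : ℝ)⁻¹ ^ sᶜ.card) * f (s.piecewise y x)

/-- Oscillation bound in coordinate `k`. -/
def Osc (k : Fin n) (f : (Fin n → Fin m) → ℝ) (c : ℝ) : Prop :=
  ∀ (x : Fin n → Fin m) (j j' : Fin m),
    f (Function.update x k j) - f (Function.update x k j') ≤ c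

variable {q : Fin m → ℝ}

lemma wgt_nonneg (hq0 : ∀ j, 0 ≤ q j) (x : Fin n → Fin m) : 0 ≤ wgt q x :=
  Finset.prod_nonneg fun _ _ => hq0 _

lemma sum_pi_prod (hq1 : ∑ j, q j = 1) (s : Finset (Fin n)) :
    ∑ y : Fin n → Fin m, ∏ k ∈ s, q (y k) = (m : ℝ) ^ sᶜ.card := by
  have h1 : ∀ y : Fin n → Fin m, ∏ k ∈ s, q (y k)
      = ∏ k : Fin n, (if k ∈ s then q (y k) else 1) := fun y => by
    rw [Fintype.prod_ite_mem]
  simp_rw [h1]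
  have h2 := (Finset.prod_univ_sum (fun _ : Fin n => (Finset.univ : Finset (Fin m)))
    (fun k j => if k ∈ s then q j else 1)).symm
  rw [Fintype.piFinset_univ] at h2
  rw [h2]
  have h3 : ∀ k : Fin n, (∑ j : Fin m, if k ∈ s then q j else 1)
      = if k ∈ s then 1 else (m : ℝ) := by
    intro k
    by_cases hk : k ∈ s <;> simp [hk, hq1]
  simp_rw [h3]
  have h4 : ∀ k : Fin n, (if k ∈ s then (1:ℝ) else (m:ℝ)) = if k ∈ sᶜ then (m:ℝ) else 1 :=
    fun k => by by_cases hk : k ∈ s <;> simp [hk]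
  simp_rw [h4]
  rw [Fintype.prod_ite_mem, Finset.prod_const]

lemma CE_weight_sum (hm : 0 < m) (hq1 : ∑ j, q j = 1) (s : Finset (Fin n)) :
    ∑ y : Fin n → Fin m, (∏ k ∈ s, q (y k)) * ((m : ℝ)⁻¹ ^ sᶜ.card) = 1 := by
  rw [← Finset.sum_mul, sum_pi_prod hq1, ← mul_pow]
  rw [mul_inv_cancel₀ (by exact_mod_cast hm.ne' : (m:ℝ) ≠ 0), one_pow]

lemma wgt_sum (hq1 : ∑ j, q j = 1) : ∑ x : Fin n → Fin m, wgt q x = 1 := by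
  have := sum_pi_prod (n := n) hq1 Finset.univ
  simpa [wgt] using this

lemma EE_const (hq1 : ∑ j, q j = 1) (c : ℝ) : EE q (fun _ : Fin n → Fin m => c) = c := by
  rw [EE, ← Finset.sum_mul, wgt_sum hq1, one_mul]

lemma EE_mono (hq0 : ∀ j, 0 ≤ q j) {f g : (Fin n → Fin m) → ℝ} (h : ∀ x, f x ≤ g x) :
    EE q f ≤ EE q g :=
  Finset.sum_le_sum fun x _ => mul_le_mul_of_nonneg_left (h x) (wgt_nonneg hq0 x)

lemma EE_smul (c : ℝ) (f : (Fin n → Fin m) → ℝ) :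
    EE q (fun x => c * f x) = c * EE q f := by
  rw [EE, EE, Finset.mul_sum]
  exact Finset.sum_congr rfl fun x _ => by ring

lemma update_funSplitAt_symm (k : Fin n) (a j : Fin m) (z : {l : Fin n // l ≠ k} → Fin m) :
    Function.update ((Equiv.funSplitAt k (Fin m)).symm (a, z)) k j
      = (Equiv.funSplitAt k (Fin m)).symm (j, z) := by
  funext l
  rcases eq_or_ne l k with rfl | hl
  · simp [Function.update_self, Equiv.funSplitAt_symm_apply]
  · simp [Function.update_of_ne hl, Equiv.funSplitAt_symm_apply, hl]

lemma sum_fiber (hm : 0 < m) (k : Fin n) (G : (Fin n → Fin m) → ℝ) :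
    ∑ y : Fin n → Fin m, G y
      = (m : ℝ)⁻¹ * ∑ j : Fin m, ∑ y : Fin n → Fin m, G (Function.update y k j) := by
  set e := Equiv.funSplitAt k (Fin m) with he
  have h1 : ∀ j : Fin m, ∑ y : Fin n → Fin m, G (Function.update y k j)
      = (m : ℝ) * ∑ z : {l : Fin n // l ≠ k} → Fin m, G (e.symm (j, z)) := by
    intro j
    rw [← e.symm.sum_comp (fun y => G (Function.update y k j))]
    rw [Fintype.sum_prod_type]
    have : ∀ (a : Fin m) (z : {l : Fin n // l ≠ k} → Fin m),
        G (Function.update (e.symm (a, z)) k j) = G (e.symm (j, z)) := fun a z => by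
      rw [update_funSplitAt_symm]
    simp_rw [this]
    rw [Finset.sum_const, Finset.card_univ, Fintype.card_fin, nsmul_eq_mul]
  have h2 : ∑ y : Fin n → Fin m, G y
      = ∑ j : Fin m, ∑ z : {l : Fin n // l ≠ k} → Fin m, G (e.symm (j, z)) := by
    rw [← e.symm.sum_comp G, Fintype.sum_prod_type]
  simp_rw [h1]
  rw [← Finset.mul_sum, ← mul_assoc, inv_mul_cancel₀ (by exact_mod_cast hm.ne' : (m:ℝ) ≠ 0),
    one_mul]
  exact h2

lemma piecewise_update_of_not_mem {s : Finset (Fin n)} {k : Fin n} (hk : k ∉ s)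
    (y x : Fin n → Fin m) (j : Fin m) :
    s.piecewise y (Function.update x k j) = Function.update (s.piecewise y x) k j := by
  funext l
  by_cases hl : l = k
  · subst hl
    simp [Finset.piecewise_eq_of_notMem _ _ _ hk, Function.update_self]
  · by_cases hls : l ∈ s
    · simp [Finset.piecewise_eq_of_mem _ _ _ hls, Function.update_of_ne hl]
    · simp [Finset.piecewise_eq_of_notMem _ _ _ hls, Function.update_of_ne hl]

lemma piecewise_insert_update {s : Finset (Fin n)} {k : Fin n} (hk : k ∉ s)
    (y x : Fin n → Fin m) (j : Fin m) :
    (insert k s).piecewise (Function.update y k j) x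
      = Function.update (s.piecewise y x) k j := by
  funext l
  by_cases hl : l = k
  · subst hl
    simp [Finset.piecewise_eq_of_mem _ _ _ (Finset.mem_insert_self l s), Function.update_self]
  · by_cases hls : l ∈ s
    · simp [Finset.piecewise_eq_of_mem _ _ _ (Finset.mem_insert_of_mem hls),
        Finset.piecewise_eq_of_mem _ _ _ hls, Function.update_of_ne hl]
    · have : l ∉ insert k s := by simp [hl, hls]
      simp [Finset.piecewise_eq_of_notMem _ _ _ this,
        Finset.piecewise_eq_of_notMem _ _ _ hls, Function.update_of_ne hl]

lemma card_compl_insert {s : Finset (Fin n)} {k : Fin n} (hk : k ∉ s) :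
    sᶜ.card = (insert k s)ᶜ.card + 1 := by
  have h1 : (insert k s).card = s.card + 1 := Finset.card_insert_of_notMem hk
  have h2 : (insert k s).card ≤ n := by
    simpa using Finset.card_le_univ (insert k s)
  rw [Finset.card_compl, Finset.card_compl, h1]
  simp only [Fintype.card_fin]
  omega

lemma CE_insert (hm : 0 < m) {s : Finset (Fin n)} {k : Fin n} (hk : k ∉ s)
    (f : (Fin n → Fin m) → ℝ) (x : Fin n → Fin m) :
    CE q (insert k s) f x = Texp q k (CE q s f) x := by
  rw [CE, sum_fiber hm k]
  rw [Texp]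
  have key : ∀ (j : Fin m) (y : Fin n → Fin m),
      (∏ l ∈ insert k s, q (Function.update y k j l)) * ((m : ℝ)⁻¹ ^ (insert k s)ᶜ.card)
        * f ((insert k s).piecewise (Function.update y k j) x)
      = q j * ((∏ l ∈ s, q (y l)) * ((m : ℝ)⁻¹ ^ (insert k s)ᶜ.card)
        * f (Function.update (s.piecewise y x) k j)) := by
    intro j y
    have hprod : ∏ l ∈ insert k s, q (Function.update y k j l)
        = q j * ∏ l ∈ s, q (y l) := by
      rw [Finset.prod_insert hk, Function.update_self]
      congr 1
      refine Finset.prod_congr rfl fun l hl => ?_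
      have hlk : l ≠ k := fun h => hk (h ▸ hl)
      rw [Function.update_of_ne hlk]
    rw [hprod, piecewise_insert_update hk]
    ring
  simp_rw [key]
  have rhs : ∀ j : Fin m, CE q s f (Function.update x k j)
      = ∑ y : Fin n → Fin m, (∏ l ∈ s, q (y l)) * ((m : ℝ)⁻¹ ^ sᶜ.card)
          * f (Function.update (s.piecewise y x) k j) := by
    intro j
    rw [CE]
    exact Finset.sum_congr rfl fun y _ => by rw [piecewise_update_of_not_mem hk]
  rw [Finset.mul_sum]
  apply Finset.sum_congr rfl
  intro j _
  rw [rhs j, Finset.mul_sum, Finset.mul_sum]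
  apply Finset.sum_congr rfl
  intro y _
  rw [card_compl_insert hk, pow_succ]
  ring

lemma CE_empty (hm : 0 < m) (hq1 : ∑ j, q j = 1) (f : (Fin n → Fin m) → ℝ) :
    CE q ∅ f = f := by
  funext x
  rw [CE]
  simp only [Finset.piecewise_empty, Finset.prod_empty]
  rw [← Finset.sum_mul, ← Finset.sum_mul]
  have := CE_weight_sum (n := n) hm hq1 ∅
  simp only [Finset.prod_empty] at this
  rw [← Finset.sum_mul] at this
  rw [this, one_mul]

lemma CE_univ (f : (Fin n → Fin m) → ℝ) (x : Fin n → Fin m) :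
    CE q Finset.univ f x = EE q f := by
  rw [CE, EE]
  simp [Finset.piecewise_univ, wgt]

lemma osc_CE (hm : 0 < m) (hq0 : ∀ j, 0 ≤ q j) (hq1 : ∑ j, q j = 1)
    {k : Fin n} {f : (Fin n → Fin m) → ℝ} {c : ℝ} (hosc : Osc k f c)
    {s : Finset (Fin n)} (hk : k ∉ s) : Osc k (CE q s f) c := by
  intro x j j'
  rw [CE, CE, ← Finset.sum_sub_distrib]
  have hbound : ∀ y : Fin n → Fin m,
      (∏ l ∈ s, q (y l)) * ((m : ℝ)⁻¹ ^ sᶜ.card) * f (s.piecewise y (Function.update x k j))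
        - (∏ l ∈ s, q (y l)) * ((m : ℝ)⁻¹ ^ sᶜ.card) * f (s.piecewise y (Function.update x k j'))
      ≤ (∏ l ∈ s, q (y l)) * ((m : ℝ)⁻¹ ^ sᶜ.card) * c := by
    intro y
    have hw : 0 ≤ (∏ l ∈ s, q (y l)) * ((m : ℝ)⁻¹ ^ sᶜ.card) := by
      apply mul_nonneg (Finset.prod_nonneg fun _ _ => hq0 _)
      positivity
    rw [piecewise_update_of_not_mem hk, piecewise_update_of_not_mem hk, ← mul_sub]
    exact mul_le_mul_of_nonneg_left (hosc _ j j') hw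
  calc ∑ y : Fin n → Fin m, _ ≤ ∑ y : Fin n → Fin m,
        (∏ l ∈ s, q (y l)) * ((m : ℝ)⁻¹ ^ sᶜ.card) * c :=
        Finset.sum_le_sum fun y _ => hbound y
    _ = c := by rw [← Finset.sum_mul, CE_weight_sum hm hq1, one_mul]

lemma tower (hm : 0 < m) (hq1 : ∑ j, q j = 1) (k : Fin n) (f : (Fin n → Fin m) → ℝ) :
    EE q (Texp q k f) = EE q f := by
  have hwgt : ∀ (y : Fin n → Fin m) (a : Fin m),
      wgt q (Function.update y k a) = q a * ∏ l ∈ Finset.univ.erase k, q (y l) := by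
    intro y a
    rw [wgt, ← Finset.mul_prod_erase Finset.univ _ (Finset.mem_univ k), Function.update_self]
    congr 1
    exact Finset.prod_congr rfl fun l hl =>
      by rw [Function.update_of_ne (Finset.ne_of_mem_erase hl)]
  have lhs : EE q (Texp q k f)
      = (m:ℝ)⁻¹ * ∑ a, ∑ y : Fin n → Fin m,
          wgt q (Function.update y k a) * Texp q k f (Function.update y k a) := by
    rw [EE, sum_fiber hm k]
  have rhs : EE q f
      = (m:ℝ)⁻¹ * ∑ a, ∑ y : Fin n → Fin m,
          wgt q (Function.update y k a) * f (Function.update y k a) := by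
    rw [EE, sum_fiber hm k]
  rw [lhs, rhs]
  congr 1
  have hTe : ∀ (y : Fin n → Fin m) (a : Fin m),
      Texp q k f (Function.update y k a) = ∑ j, q j * f (Function.update y k j) := by
    intro y a
    rw [Texp]
    exact Finset.sum_congr rfl fun j _ => by rw [Function.update_idem]
  calc ∑ a, ∑ y : Fin n → Fin m,
        wgt q (Function.update y k a) * Texp q k f (Function.update y k a)
      = ∑ a, ∑ y : Fin n → Fin m, q a * ((∏ l ∈ Finset.univ.erase k, q (y l))
          * ∑ j, q j * f (Function.update y k j)) := by
        apply Finset.sum_congr rfl; intro a _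
        apply Finset.sum_congr rfl; intro y _
        rw [hwgt, hTe]; ring
    _ = ∑ y : Fin n → Fin m, (∏ l ∈ Finset.univ.erase k, q (y l))
          * ∑ j, q j * f (Function.update y k j) := by
        simp_rw [← Finset.mul_sum]
        rw [← Finset.sum_mul, hq1, one_mul]
    _ = ∑ a, ∑ y : Fin n → Fin m,
        wgt q (Function.update y k a) * f (Function.update y k a) := by
        rw [Finset.sum_comm]
        apply Finset.sum_congr rfl; intro y _
        rw [Finset.mul_sum]
        apply Finset.sum_congr rfl; intro a _
        rw [hwgt]; ring




lemma Texp_exp_le (hm : 0 < m) (hq0 : ∀ j, 0 ≤ q j) (hq1 : ∑ j, q j = 1)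
    {k : Fin n} {f : (Fin n → Fin m) → ℝ} {c lam : ℝ} (hc : 0 ≤ c) (hosc : Osc k f c)
    (x : Fin n → Fin m) :
    Texp q k (fun y => Real.exp (lam * f y)) x
      ≤ Real.exp (lam ^ 2 * c ^ 2 / 8) * Real.exp (lam * Texp q k f x) := by
  haveI : NeZero m := ⟨hm.ne'⟩
  have := hoeffding_avg (lam := lam) q (fun j => f (Function.update x k j)) hq0 hq1 hc
    (fun j j' => hosc x j j')
  simpa [Texp] using this

lemma mgf_partial (hm : 0 < m) (hq0 : ∀ j, 0 ≤ q j) (hq1 : ∑ j, q j = 1)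
    {f : (Fin n → Fin m) → ℝ} {c lam : ℝ} (hc : 0 ≤ c) (hosc : ∀ k, Osc k f c)
    (s : Finset (Fin n)) :
    EE q (fun x => Real.exp (lam * f x))
      ≤ Real.exp (lam ^ 2 * c ^ 2 / 8) ^ s.card
        * EE q (fun x => Real.exp (lam * CE q s f x)) := by
  induction s using Finset.induction_on with
  | empty =>
    simp only [CE_empty hm hq1, Finset.card_empty, pow_zero, one_mul]
    exact le_refl _
  | @insert k s hk ih =>
    have h1 : EE q (fun x => Real.exp (lam * CE q s f x))
        = EE q (Texp q k (fun x => Real.exp (lam * CE q s f x))) :=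
      (tower hm hq1 k _).symm
    have h2 : ∀ x, Texp q k (fun y => Real.exp (lam * CE q s f y)) x
        ≤ Real.exp (lam ^ 2 * c ^ 2 / 8) * Real.exp (lam * CE q (insert k s) f x) := by
      intro x
      rw [CE_insert hm hk f x]
      exact Texp_exp_le hm hq0 hq1 hc (osc_CE hm hq0 hq1 (hosc k) hk) x
    calc EE q (fun x => Real.exp (lam * f x))
        ≤ Real.exp (lam ^ 2 * c ^ 2 / 8) ^ s.card
          * EE q (fun x => Real.exp (lam * CE q s f x)) := ih
      _ = Real.exp (lam ^ 2 * c ^ 2 / 8) ^ s.card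
          * EE q (Texp q k (fun x => Real.exp (lam * CE q s f x))) := by rw [← h1]
      _ ≤ Real.exp (lam ^ 2 * c ^ 2 / 8) ^ s.card
          * EE q (fun x => Real.exp (lam ^ 2 * c ^ 2 / 8)
              * Real.exp (lam * CE q (insert k s) f x)) := by
          apply mul_le_mul_of_nonneg_left _ (pow_nonneg (Real.exp_pos _).le _)
          exact EE_mono hq0 h2
      _ = Real.exp (lam ^ 2 * c ^ 2 / 8) ^ (insert k s).card
          * EE q (fun x => Real.exp (lam * CE q (insert k s) f x)) := by
          rw [EE_smul, Finset.card_insert_of_notMem hk, pow_succ]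
          ring

theorem mgf_bound (hm : 0 < m) (hq0 : ∀ j, 0 ≤ q j) (hq1 : ∑ j, q j = 1)
    {f : (Fin n → Fin m) → ℝ} {c lam : ℝ} (hc : 0 ≤ c) (hosc : ∀ k, Osc k f c) :
    EE q (fun x => Real.exp (lam * f x))
      ≤ Real.exp (lam ^ 2 * c ^ 2 / 8) ^ n * Real.exp (lam * EE q f) := by
  have h := mgf_partial (lam := lam) hm hq0 hq1 hc hosc Finset.univ
  have h2 : ∀ x : Fin n → Fin m, Real.exp (lam * CE q Finset.univ f x)
      = Real.exp (lam * EE q f) := fun x => by rw [CE_univ]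
  simp_rw [h2] at h
  rw [EE_const hq1, Finset.card_univ, Fintype.card_fin] at h
  exact h

theorem mcdiarmid_chernoff (hm : 0 < m) (hq0 : ∀ j, 0 ≤ q j) (hq1 : ∑ j, q j = 1)
    {f : (Fin n → Fin m) → ℝ} {c lam t : ℝ} (hc : 0 ≤ c) (hosc : ∀ k, Osc k f c)
    (hlam : 0 ≤ lam) :
    ∑ x ∈ Finset.univ.filter (fun x : Fin n → Fin m => EE q f + t ≤ f x), wgt q x
      ≤ Real.exp (lam ^ 2 * c ^ 2 / 8 * n - lam * t) := by
  have hterm : ∀ x : Fin n → Fin m, 0 ≤ wgt q x * Real.exp (lam * (f x - (EE q f + t))) :=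
    fun x => mul_nonneg (wgt_nonneg hq0 x) (Real.exp_pos _).le
  have step1 : ∑ x ∈ Finset.univ.filter (fun x : Fin n → Fin m => EE q f + t ≤ f x), wgt q x
      ≤ ∑ x : Fin n → Fin m, wgt q x * Real.exp (lam * (f x - (EE q f + t))) := by
    calc ∑ x ∈ Finset.univ.filter (fun x : Fin n → Fin m => EE q f + t ≤ f x), wgt q x
        ≤ ∑ x ∈ Finset.univ.filter (fun x : Fin n → Fin m => EE q f + t ≤ f x),
            wgt q x * Real.exp (lam * (f x - (EE q f + t))) := by
          apply Finset.sum_le_sum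
          intro x hx
          rw [Finset.mem_filter] at hx
          nth_rewrite 1 [← mul_one (wgt q x)]
          apply mul_le_mul_of_nonneg_left _ (wgt_nonneg hq0 x)
          rw [← Real.exp_zero]
          exact Real.exp_le_exp.2 (mul_nonneg hlam (by linarith [hx.2]))
      _ ≤ ∑ x : Fin n → Fin m, wgt q x * Real.exp (lam * (f x - (EE q f + t))) :=
          Finset.sum_le_sum_of_subset_of_nonneg (Finset.filter_subset _ _)
            (fun x _ _ => hterm x)
  have step2 : ∑ x : Fin n → Fin m, wgt q x * Real.exp (lam * (f x - (EE q f + t)))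
      = EE q (fun x => Real.exp (lam * f x)) * Real.exp (-(lam * (EE q f + t))) := by
    have hEE : EE q (fun x => Real.exp (lam * f x))
        = ∑ x : Fin n → Fin m, wgt q x * Real.exp (lam * f x) := rfl
    rw [hEE, Finset.sum_mul]
    apply Finset.sum_congr rfl
    intro x _
    rw [mul_assoc, ← Real.exp_add]
    congr 2
    ring
  have step3 := mgf_bound (lam := lam) hm hq0 hq1 hc hosc
  calc ∑ x ∈ Finset.univ.filter (fun x : Fin n → Fin m => EE q f + t ≤ f x), wgt q x
      ≤ EE q (fun x => Real.exp (lam * f x)) * Real.exp (-(lam * (EE q f + t))) := by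
        rw [← step2]; exact step1
    _ ≤ (Real.exp (lam ^ 2 * c ^ 2 / 8) ^ n * Real.exp (lam * EE q f))
          * Real.exp (-(lam * (EE q f + t))) :=
        mul_le_mul_of_nonneg_right step3 (Real.exp_pos _).le
    _ = Real.exp (lam ^ 2 * c ^ 2 / 8 * n - lam * t) := by
        rw [← Real.exp_nat_mul, ← Real.exp_add, ← Real.exp_add]
        congr 1
        ring


/-- The empirical entropy statistic (in bits). -/
noncomputable def fent (n m : ℕ) (x : Fin n → Fin m) : ℝ :=
  ∑ i, Real.negMulLog (((Finset.univ.filter fun k => x k = i).card : ℝ) / n) / Real.log 2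

lemma count_update (x : Fin n → Fin m) (k : Fin n) (j i : Fin m) :
    (Finset.univ.filter fun l => Function.update x k j l = i).card
      = ((Finset.univ.erase k).filter fun l => x l = i).card + (if j = i then 1 else 0) := by
  by_cases hji : j = i
  · subst hji
    have hset : (Finset.univ.filter fun l => Function.update x k j l = j)
        = insert k ((Finset.univ.erase k).filter fun l => x l = j) := by
      ext l
      by_cases hlk : l = k
      · subst hlk; simp [Function.update_self]
      · simp [Function.update_of_ne hlk, hlk]
    rw [hset, Finset.card_insert_of_notMem (by simp), if_pos rfl]
  · have hset : (Finset.univ.filter fun l => Function.update x k j l = i)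
        = (Finset.univ.erase k).filter fun l => x l = i := by
      ext l
      by_cases hlk : l = k
      · subst hlk; simp [Function.update_self, hji]
      · simp [Function.update_of_ne hlk, hlk]
    rw [hset, if_neg hji, add_zero]

lemma osc_fent (hn : 2 ≤ n) (hm : 0 < m) (k : Fin n) :
    Osc k (fent n m) (2 * Real.logb 2 (n : ℝ) / n) := by
  have hN0 : (0:ℝ) < n := by positivity
  have hlog2 : (0:ℝ) < Real.log 2 := Real.log_pos (by norm_num)
  have hlogN : 0 ≤ Real.log n := Real.log_nonneg (by exact_mod_cast hn.trans' (by norm_num))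
  have hlogb : Real.logb 2 (n:ℝ) = Real.log n / Real.log 2 := rfl
  intro x j j'
  by_cases hjj : j = j'
  · subst hjj
    rw [sub_self]
    have h1 : 0 ≤ Real.logb 2 (n:ℝ) :=
      Real.logb_nonneg (by norm_num) (by exact_mod_cast hn.trans' (by norm_num))
    positivity
  · set b : Fin m → ℕ := fun i => ((Finset.univ.erase k).filter fun l => x l = i).card with hb
    have hbn : ∀ i, b i + 1 ≤ n := by
      intro i
      have h1 : b i ≤ (Finset.univ.erase k).card := Finset.card_filter_le _ _
      rw [Finset.card_erase_of_mem (Finset.mem_univ k), Finset.card_univ,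
        Fintype.card_fin] at h1
      omega
    have hdiff : fent n m (Function.update x k j) - fent n m (Function.update x k j')
        = ∑ i, (Real.negMulLog (((b i + (if j = i then 1 else 0) : ℕ) : ℝ) / n)
              - Real.negMulLog (((b i + (if j' = i then 1 else 0) : ℕ) : ℝ) / n))
            / Real.log 2 := by
      rw [fent, fent, ← Finset.sum_sub_distrib]
      apply Finset.sum_congr rfl
      intro i _
      rw [count_update x k j i, count_update x k j' i, div_sub_div_same]
    rw [hdiff]
    have hzero : ∀ i ∈ (Finset.univ : Finset (Fin m)), i ∉ ({j, j'} : Finset (Fin m)) →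
        (Real.negMulLog (((b i + (if j = i then 1 else 0) : ℕ) : ℝ) / n)
          - Real.negMulLog (((b i + (if j' = i then 1 else 0) : ℕ) : ℝ) / n))
            / Real.log 2 = 0 := by
      intro i _ hi
      simp only [Finset.mem_insert, Finset.mem_singleton] at hi
      push_neg at hi
      rw [if_neg (fun h => hi.1 h.symm), if_neg (fun h => hi.2 h.symm)]
      simp
    rw [← Finset.sum_subset (Finset.subset_univ ({j, j'} : Finset (Fin m))) hzero]
    rw [Finset.sum_pair hjj]
    have hgrid : ∀ i : Fin m,
        |Real.negMulLog (((b i : ℝ) + 1) / n) - Real.negMulLog ((b i : ℝ) / n)|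
          ≤ Real.log n / n := fun i => grid_negMulLog hn (b i) (hbn i)
    have hterm1 : (Real.negMulLog (((b j + (if j = j then 1 else 0) : ℕ) : ℝ) / n)
          - Real.negMulLog (((b j + (if j' = j then 1 else 0) : ℕ) : ℝ) / n)) / Real.log 2
        ≤ (Real.log n / n) / Real.log 2 := by
      rw [if_pos rfl, if_neg (Ne.symm hjj), add_zero]
      apply (div_le_div_iff_of_pos_right hlog2).2
      push_cast
      exact (abs_sub_le_iff.1 (hgrid j)).1
    have hterm2 : (Real.negMulLog (((b j' + (if j = j' then 1 else 0) : ℕ) : ℝ) / n)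
          - Real.negMulLog (((b j' + (if j' = j' then 1 else 0) : ℕ) : ℝ) / n)) / Real.log 2
        ≤ (Real.log n / n) / Real.log 2 := by
      rw [if_neg hjj, add_zero, if_pos rfl]
      apply (div_le_div_iff_of_pos_right hlog2).2
      push_cast
      exact (abs_sub_le_iff.1 (hgrid j')).2
    calc _ ≤ (Real.log n / n) / Real.log 2 + (Real.log n / n) / Real.log 2 :=
          add_le_add hterm1 hterm2
      _ = 2 * Real.logb 2 (n : ℝ) / n := by rw [hlogb]; ring


lemma marginal (hm : 0 < m) (hq0 : ∀ j, 0 ≤ q j) (hq1 : ∑ j, q j = 1)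
    (k : Fin n) (i : Fin m) :
    ∑ x : Fin n → Fin m, wgt q x * (if x k = i then (1:ℝ) else 0) = q i := by
  have h1 : ∀ x : Fin n → Fin m, wgt q x * (if x k = i then (1:ℝ) else 0)
      = if x k = i then wgt q x else 0 := by
    intro x; split_ifs <;> simp
  simp_rw [h1]
  rw [← Finset.sum_filter]
  have h2 : (Finset.univ.filter fun x : Fin n → Fin m => x k = i)
      = Fintype.piFinset (fun l => if l = k then {i} else Finset.univ) := by
    ext x
    simp only [Finset.mem_filter, Finset.mem_univ, true_and, Fintype.mem_piFinset]
    constructor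
    · intro hx l
      by_cases hlk : l = k
      · subst hlk; simp [hx]
      · simp [hlk]
    · intro hx
      have := hx k
      simpa using this
  rw [h2]
  have h3 := (Finset.prod_univ_sum (fun l : Fin n => if l = k then ({i} : Finset (Fin m))
    else Finset.univ) (fun _ j => q j)).symm
  simp only [wgt]
  rw [h3]
  have h4 : ∀ l : Fin n, (∑ j ∈ (if l = k then ({i} : Finset (Fin m)) else Finset.univ), q j)
      = if l = k then q i else 1 := by
    intro l
    by_cases hlk : l = k <;> simp [hlk, hq1]
  simp_rw [h4]
  rw [Finset.prod_ite_eq' Finset.univ k (fun _ => q i), if_pos (Finset.mem_univ k)]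

lemma mean_fent (hm : 0 < m) (hn : 0 < n) (hq0 : ∀ j, 0 ≤ q j) (hq1 : ∑ j, q j = 1) :
    EE q (fent n m) ≤ ∑ i, Real.negMulLog (q i) / Real.log 2 := by
  have hlog2 : (0:ℝ) < Real.log 2 := Real.log_pos (by norm_num)
  have hswap : EE q (fent n m)
      = ∑ i, (∑ x : Fin n → Fin m, wgt q x
            * Real.negMulLog (((Finset.univ.filter fun l => x l = i).card : ℝ) / n))
          / Real.log 2 := by
    rw [EE]
    simp_rw [fent, Finset.mul_sum, ← mul_div_assoc]
    rw [Finset.sum_comm]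
    simp_rw [← Finset.sum_div]
  rw [hswap]
  apply Finset.sum_le_sum
  intro i _
  apply (div_le_div_iff_of_pos_right hlog2).2
  have hjen := Real.concaveOn_negMulLog.le_map_sum
    (t := (Finset.univ : Finset (Fin n → Fin m))) (w := wgt q)
    (p := fun x => ((Finset.univ.filter fun l => x l = i).card : ℝ) / n)
    (fun x _ => wgt_nonneg hq0 x) (wgt_sum hq1)
    (fun x _ => Set.mem_Ici.2 (by positivity))
  simp only [smul_eq_mul] at hjen
  refine hjen.trans (le_of_eq ?_)
  congr 1
  -- marginal computation
  have hcnt : ∀ x : Fin n → Fin m, ((Finset.univ.filter fun l => x l = i).card : ℝ)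
      = ∑ k : Fin n, (if x k = i then (1:ℝ) else 0) := by
    intro x
    rw [Finset.card_filter]
    push_cast
    rfl
  simp_rw [hcnt, Finset.sum_div, Finset.mul_sum]
  rw [Finset.sum_comm]
  have hone : ∀ k : Fin n, ∑ x : Fin n → Fin m,
      wgt q x * ((if x k = i then (1:ℝ) else 0) / n) = q i / n := by
    intro k
    have hmarg := marginal hm hq0 hq1 k i
    calc ∑ x : Fin n → Fin m, wgt q x * ((if x k = i then (1:ℝ) else 0) / n)
        = (∑ x : Fin n → Fin m, wgt q x * (if x k = i then (1:ℝ) else 0)) / n := by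
          rw [Finset.sum_div]
          exact Finset.sum_congr rfl fun x _ => by ring
      _ = q i / n := by rw [hmarg]
  simp_rw [hone]
  rw [Finset.sum_const, Finset.card_univ, Fintype.card_fin, nsmul_eq_mul]
  field_simp



theorem entropy_tail {n m : ℕ} (hm : 0 < m) (hn : 2 ≤ n) {q : Fin m → ℝ}
    (hq0 : ∀ j, 0 ≤ q j) (hq1 : ∑ j, q j = 1) {ε : ℝ} (hε0 : 0 < ε) (hε1 : ε ≤ 1) :
    ∑ x ∈ Finset.univ.filter (fun x : Fin n → Fin m =>
        (∑ i, Real.negMulLog (q i) / Real.log 2)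
          + Real.sqrt (2 * Real.logb 2 (n:ℝ) ^ 2 * Real.log (2 / ε) / n) ≤ fent n m x),
      wgt q x ≤ ε := by
  have hn0 : (0:ℝ) < n := by positivity
  have hlog2 : (0:ℝ) < Real.log 2 := Real.log_pos (by norm_num)
  have hL : 1 ≤ Real.logb 2 (n:ℝ) := by
    rw [Real.logb, le_div_iff₀ hlog2, one_mul]
    exact Real.log_le_log (by norm_num) (by exact_mod_cast hn)
  set L := Real.logb 2 (n:ℝ) with hLdef
  have hL0 : 0 < L := lt_of_lt_of_le one_pos hL
  have hX : 0 < Real.log (2/ε) := Real.log_pos (by rw [lt_div_iff₀ hε0]; linarith)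
  set c : ℝ := 2 * L / n with hc
  have hc0 : 0 < c := by positivity
  set t : ℝ := Real.sqrt (2 * L ^ 2 * Real.log (2/ε) / n) with ht
  have harg : 0 < 2 * L ^ 2 * Real.log (2/ε) / n := by positivity
  have ht0 : 0 < t := Real.sqrt_pos.2 harg
  have ht2 : t ^ 2 = 2 * L ^ 2 * Real.log (2/ε) / n := Real.sq_sqrt harg.le
  set lam : ℝ := 4 * t / ((n:ℝ) * c ^ 2) with hlam
  have hlam0 : 0 ≤ lam := by positivity
  have hmean := mean_fent (q := q) hm (lt_of_lt_of_le (by norm_num) hn) hq0 hq1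
  have hsubset : (Finset.univ.filter (fun x : Fin n → Fin m =>
        (∑ i, Real.negMulLog (q i) / Real.log 2) + t ≤ fent n m x))
      ⊆ Finset.univ.filter (fun x : Fin n → Fin m =>
        EE q (fent n m) + t ≤ fent n m x) := by
    intro x hx
    rw [Finset.mem_filter] at hx ⊢
    exact ⟨hx.1, by linarith [hx.2]⟩
  have hosc : ∀ k : Fin n, Osc k (fent n m) c := fun k => osc_fent hn hm k
  calc ∑ x ∈ Finset.univ.filter (fun x : Fin n → Fin m =>
        (∑ i, Real.negMulLog (q i) / Real.log 2) + t ≤ fent n m x), wgt q x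
      ≤ ∑ x ∈ Finset.univ.filter (fun x : Fin n → Fin m =>
        EE q (fent n m) + t ≤ fent n m x), wgt q x :=
        Finset.sum_le_sum_of_subset_of_nonneg hsubset (fun x _ _ => wgt_nonneg hq0 x)
    _ ≤ Real.exp (lam ^ 2 * c ^ 2 / 8 * n - lam * t) :=
        mcdiarmid_chernoff hm hq0 hq1 hc0.le hosc hlam0
    _ ≤ ε := by
        have e1 : lam ^ 2 * c ^ 2 / 8 * (n:ℝ) - lam * t = -(2 * t ^ 2 / ((n:ℝ) * c ^ 2)) := by
          rw [hlam]
          field_simp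
          ring
        have e2 : 2 * t ^ 2 / ((n:ℝ) * c ^ 2) = Real.log (2/ε) := by
          rw [ht2, hc]
          field_simp
        rw [e1, e2, Real.exp_neg, Real.exp_log (by positivity)]
        rw [inv_div]
        linarith

end EMcD

/-- **Conditioned version of the entropy lower bound.** For `n ≥ 2` i.i.d. samples from a
distribution `p` on a finite alphabet of size `m`, with empirical entropy `Ĥ_MLE` and
Shannon entropy `H(p)`, and any event `A` measurable with respect to the σ-algebra
generated by the samples with `Pr[A] > 0`, for every `ε ∈ (0, 1]` the probability under
the conditional law given `A` that `H(p) ≤ Ĥ_MLE - √(2 (log₂ n)² ln(2/ε) / n)` is at most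
`ε / Pr[A]`. -/
theorem entropy_lower_bound_from_empirical_conditioned
    {Ω : Type*} [MeasurableSpace Ω] (μ : Measure Ω) [IsProbabilityMeasure μ]
    (m n : ℕ) (hm : 1 ≤ m) (hn : 2 ≤ n)
    (U : Fin n → Ω → Fin m)
    (hmeas : ∀ k, Measurable (U k))
    (hindep : iIndepFun U μ)
    (p : Fin m → ℝ) (hp : ∀ k i, (μ {ω | U k ω = i}).toReal = p i)
    (phat : Fin m → Ω → ℝ)
    (hphat : ∀ i ω, phat i ω = ((Finset.univ.filter fun k => U k ω = i).card : ℝ) / n)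
    (Hmle : Ω → ℝ)
    (hHmle : ∀ ω, Hmle ω = -∑ i : Fin m, phat i ω * Real.logb 2 (phat i ω))
    (A : Set Ω)
    (hA : MeasurableSet[⨆ k, MeasurableSpace.comap (U k) (inferInstance : MeasurableSpace (Fin m))] A)
    (hpA : 0 < (μ A).toReal)
    (ε : ℝ) (hε₀ : 0 < ε) (hε₁ : ε ≤ 1) :
    μ[|A] {ω | -∑ i : Fin m, p i * Real.logb 2 (p i)
          ≤ Hmle ω - Real.sqrt (2 * (Real.logb 2 n) ^ 2 * Real.log (2 / ε) / n)}
      ≤ ENNReal.ofReal (ε / (μ A).toReal) := by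
  classical
  have hm0 : 0 < m := hm
  have hn0 : 0 < n := by omega
  set t : ℝ := Real.sqrt (2 * (Real.logb 2 n) ^ 2 * Real.log (2 / ε) / n) with htdef
  -- basic facts about p
  have hq0 : ∀ i, 0 ≤ p i := fun i => (hp ⟨0, hn0⟩ i) ▸ ENNReal.toReal_nonneg
  have hq1 : ∑ i, p i = 1 := by
    set k0 : Fin n := ⟨0, hn0⟩
    have hEm : ∀ i : Fin m, MeasurableSet {ω | U k0 ω = i} := by
      intro i
      have : {ω | U k0 ω = i} = U k0 ⁻¹' {i} := by ext ω; simp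
      rw [this]
      exact hmeas k0 (measurableSet_singleton i)
    have hdisj : Pairwise (Function.onFun Disjoint fun i : Fin m => {ω | U k0 ω = i}) := by
      intro i j hij
      simp only [Function.onFun, Set.disjoint_left]
      intro ω h1 h2
      exact hij (h1.symm.trans h2)
    have hcover : (⋃ i : Fin m, {ω | U k0 ω = i}) = Set.univ := by
      ext ω; simp
    have h1 : μ Set.univ = ∑ i : Fin m, μ {ω | U k0 ω = i} := by
      rw [← hcover, measure_iUnion hdisj hEm, tsum_fintype]
    have h2 : (1:ℝ) = ∑ i : Fin m, (μ {ω | U k0 ω = i}).toReal := by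
      rw [← ENNReal.toReal_sum (fun i _ => measure_ne_top μ _), ← h1]
      simp
    rw [h2]
    exact Finset.sum_congr rfl fun i _ => (hp k0 i).symm
  -- entropies in terms of negMulLog
  have hHp : -∑ i : Fin m, p i * Real.logb 2 (p i)
      = ∑ i, Real.negMulLog (p i) / Real.log 2 := by
    rw [← Finset.sum_neg_distrib]
    exact Finset.sum_congr rfl fun i _ => by
      rw [Real.logb, Real.negMulLog]; ring
  have hHf : ∀ ω, Hmle ω = EMcD.fent n m (fun k => U k ω) := by
    intro ω
    rw [hHmle ω, EMcD.fent, ← Finset.sum_neg_distrib]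
    refine Finset.sum_congr rfl fun i _ => ?_
    rw [hphat i ω, Real.logb, Real.negMulLog]
    ring
  -- the event as a finite union
  set F : Finset (Fin n → Fin m) := Finset.univ.filter (fun x : Fin n → Fin m =>
      (∑ i, Real.negMulLog (p i) / Real.log 2) + t ≤ EMcD.fent n m x) with hF
  set S : Set Ω := {ω | -∑ i : Fin m, p i * Real.logb 2 (p i) ≤ Hmle ω - t} with hS
  have hSunion : S = ⋃ x ∈ F, ⋂ k, U k ⁻¹' {x k} := by
    ext ω
    simp only [hS, Set.mem_setOf_eq, Set.mem_iUnion, Set.mem_iInter, Set.mem_preimage,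
      Set.mem_singleton_iff]
    constructor
    · intro hω
      refine ⟨fun k => U k ω, ?_, fun k => rfl⟩
      rw [hF, Finset.mem_filter]
      refine ⟨Finset.mem_univ _, ?_⟩
      rw [← hHp, ← hHf ω]
      linarith
    · rintro ⟨x, hxF, hx⟩
      rw [hF, Finset.mem_filter] at hxF
      have hxω : (fun k => U k ω) = x := funext hx
      have := hxF.2
      rw [← hxω, ← hHp, ← hHf ω] at this
      linarith
  -- measurability
  have hAx : ∀ x : Fin n → Fin m, MeasurableSet (⋂ k, U k ⁻¹' {x k}) :=
    fun x => MeasurableSet.iInter fun k => hmeas k (measurableSet_singleton (x k))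
  have hSmeas : MeasurableSet S := by
    rw [hSunion]
    exact F.measurableSet_biUnion fun x _ => hAx x
  -- measure of each atom
  have hatom : ∀ x : Fin n → Fin m, μ (⋂ k, U k ⁻¹' {x k})
      = ENNReal.ofReal (EMcD.wgt p x) := by
    intro x
    have h1 : μ (⋂ k, U k ⁻¹' {x k}) = ∏ k, μ (U k ⁻¹' {x k}) := by
      apply hindep.meas_iInter
      intro k
      exact ⟨{x k}, measurableSet_singleton (x k), rfl⟩
    rw [h1]
    have h2 : ∀ k : Fin n, μ (U k ⁻¹' {x k}) = ENNReal.ofReal (p (x k)) := by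
      intro k
      have hpre : U k ⁻¹' {x k} = {ω | U k ω = x k} := by ext ω; simp
      rw [hpre, ← hp k (x k), ENNReal.ofReal_toReal (measure_ne_top μ _)]
    simp_rw [h2]
    rw [← ENNReal.ofReal_prod_of_nonneg (fun k _ => hq0 (x k))]
    rfl
  -- measure of the event
  have hdisjF : (F : Set (Fin n → Fin m)).PairwiseDisjoint
      (fun x : Fin n → Fin m => ⋂ k, U k ⁻¹' {x k}) := by
    intro x _ y _ hxy
    simp only [Function.onFun, Set.disjoint_left]
    intro ω h1 h2
    simp only [Set.mem_iInter, Set.mem_preimage, Set.mem_singleton_iff] at h1 h2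
    exact hxy (funext fun k => (h1 k).symm.trans (h2 k))
  have hμS : μ S ≤ ENNReal.ofReal ε := by
    rw [hSunion, measure_biUnion_finset hdisjF fun x _ => hAx x]
    have hwgt0 : ∀ x : Fin n → Fin m, 0 ≤ EMcD.wgt p x :=
      fun x => Finset.prod_nonneg fun k _ => hq0 (x k)
    calc ∑ x ∈ F, μ (⋂ k, U k ⁻¹' {x k})
        = ∑ x ∈ F, ENNReal.ofReal (EMcD.wgt p x) :=
          Finset.sum_congr rfl fun x _ => hatom x
      _ = ENNReal.ofReal (∑ x ∈ F, EMcD.wgt p x) :=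
          (ENNReal.ofReal_sum_of_nonneg (fun x _ => hwgt0 x)).symm
      _ ≤ ENNReal.ofReal ε :=
          ENNReal.ofReal_le_ofReal (EMcD.entropy_tail hm0 hn hq0 hq1 hε₀ hε₁)
  -- conditional measure
  have hcond : μ[|A] S = (μ A)⁻¹ * μ (A ∩ S) := cond_apply' hSmeas μ
  rw [hcond]
  have hμA : μ A ≠ 0 := by
    intro h
    rw [h] at hpA
    simp at hpA
  calc (μ A)⁻¹ * μ (A ∩ S) ≤ (μ A)⁻¹ * ENNReal.ofReal ε := by
        apply mul_le_mul_right ((measure_mono Set.inter_subset_right).trans hμS)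
    _ = ENNReal.ofReal ε / μ A := by rw [ENNReal.div_eq_inv_mul]
    _ = ENNReal.ofReal ε / ENNReal.ofReal ((μ A).toReal) := by
        rw [ENNReal.ofReal_toReal (measure_ne_top μ A)]
    _ = ENNReal.ofReal (ε / (μ A).toReal) := (ENNReal.ofReal_div_of_pos hpA).symm
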